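/- Every monic integer polynomial of degree 3 that is reducible over ℤ, has all three of its roots of equal modulus, and factors as the product of a degree-one factor and an irreducible degree-two factor, is of the form (x + a)(x² + bx + a²) with integers a, b satisfying b² − 4a² < 0. -/

import Mathlib

open Polynomial

lemma aux_noroot (q : Polynomial ℤ) (hq2 : q.natDegree = 2) (hirr : Irreducible q)
    (n : ℤ) : q.eval n ≠ 0 := by
  intro h
  obtain ⟨g, hg⟩ := dvd_iff_isRoot.mpr h
  rcases hirr.isUnit_or_isUnit hg with hu | hu
  · exact (not_isUnit_X_sub_C n) hu
  · have hq0 : q ≠ 0 := fun h0 => by simp [h0] at hq2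
    have hg0 : g ≠ 0 := fun h0 => hq0 (by rw [hg, h0, mul_zero])
    have hgd := natDegree_eq_zero_of_isUnit hu
    rw [hg, natDegree_mul (X_sub_C_ne_zero n) hg0, natDegree_X_sub_C, hgd] at hq2
    omega

lemma aux_main (f l q : Polynomial ℤ) (hm : f.Monic)
    (heqmod : ∀ z ∈ (f.map (Int.castRingHom ℂ)).roots,
      ∀ w ∈ (f.map (Int.castRingHom ℂ)).roots, ‖z‖ = ‖w‖)
    (hml : l.Monic) (hmq : q.Monic) (hl1 : l.natDegree = 1) (hq2 : q.natDegree = 2)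
    (hirr : Irreducible q) (hfq : f = l * q) :
    ∃ a b : ℤ, f = (X + C a) * (X ^ 2 + C b * X + C (a ^ 2)) ∧ b ^ 2 - 4 * a ^ 2 < 0 := by
  set a := l.coeff 0 with ha
  have hl : l = X + C a := hml.eq_X_add_C hl1
  set b := q.coeff 1 with hb
  set c := q.coeff 0 with hcdef
  have hc2 : q.coeff 2 = 1 := by rw [← hq2]; exact hmq.coeff_natDegree
  have hq : q = X ^ 2 + C b * X + C c := by
    ext n
    match n with
    | 0 => simp only [coeff_add, coeff_X_pow, coeff_C_mul, coeff_X, coeff_C]; norm_num [hcdef]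
    | 1 => simp only [coeff_add, coeff_X_pow, coeff_C_mul, coeff_X, coeff_C]; norm_num [hb]
    | 2 => simp only [coeff_add, coeff_X_pow, coeff_C_mul, coeff_X, coeff_C]; norm_num [hc2]
    | (m+3) =>
      have h0 : q.coeff (m+3) = 0 := coeff_eq_zero_of_natDegree_lt (by omega)
      simp only [coeff_add, coeff_X_pow, coeff_C_mul, coeff_X, coeff_C]
      norm_num [h0, if_neg (show ¬(m + 3 = 2) by omega)]
  set φ := Int.castRingHom ℂ with hφ
  set F := f.map φ with hF
  have hFmul : F = l.map φ * q.map φ := by rw [hF, hfq, Polynomial.map_mul]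
  have hL : l.map φ = X + C (a : ℂ) := by rw [hl]; simp
  have hQ : q.map φ = X ^ 2 + C (b : ℂ) * X + C (c : ℂ) := by rw [hq]; simp
  have hF0 : F ≠ 0 := (hm.map φ).ne_zero
  have hQdeg : 0 < (q.map φ).degree := by
    rw [degree_eq_natDegree (hmq.map φ).ne_zero, hmq.natDegree_map, hq2]
    norm_num
  obtain ⟨z, hz⟩ := Complex.exists_root hQdeg
  have hzeq : z ^ 2 + (b : ℂ) * z + (c : ℂ) = 0 := by
    have h := hz
    rw [hQ] at h
    simpa [IsRoot] using h
  set w : ℂ := -(b : ℂ) - z with hwdef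
  have hweq : w ^ 2 + (b : ℂ) * w + (c : ℂ) = 0 := by
    rw [hwdef]; linear_combination hzeq
  have hwroot : (q.map φ).IsRoot w := by
    rw [hQ]
    simp only [IsRoot, eval_add, eval_pow, eval_mul, eval_C, eval_X]
    linear_combination hweq
  have hmem : ∀ t : ℂ, (q.map φ).IsRoot t → t ∈ F.roots := by
    intro t ht
    refine (mem_roots hF0).mpr ?_
    have hev : eval t (q.map φ) = 0 := ht
    show eval t F = 0
    rw [hFmul, eval_mul, hev, mul_zero]
  have hza : -(a : ℂ) ∈ F.roots := by
    refine (mem_roots hF0).mpr ?_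
    show eval (-(a : ℂ)) F = 0
    rw [hFmul, eval_mul, hL]
    simp
  have habsz : ‖z‖ = ‖(-(a : ℂ))‖ := heqmod z (hmem z hz) _ hza
  have habsw : ‖w‖ = ‖(-(a : ℂ))‖ := heqmod w (hmem w hwroot) _ hza
  have hnoroot : ∀ n : ℤ, q.eval n ≠ 0 := aux_noroot q hq2 hirr
  have habsa : ‖(-(a : ℂ))‖ = |(a : ℝ)| := by
    rw [norm_neg, Complex.norm_intCast]
  have hreal : ∀ t : ℂ, (q.map φ).IsRoot t → ‖t‖ = ‖(-(a : ℂ))‖ →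
      t.im = 0 → False := by
    intro t ht habs him
    have htre : t = (t.re : ℂ) := by
      apply Complex.ext <;> simp [him]
    have h1 : |t.re| = |(a : ℝ)| := by
      rw [← habsa, ← habs]
      conv_rhs => rw [htre]
      rw [Complex.norm_real, Real.norm_eq_abs]
    rcases abs_eq_abs.mp h1 with h2 | h2
    · apply hnoroot a
      have ht' : (q.map φ).eval ((a : ℤ) : ℂ) = 0 := by
        have heq : t = ((a : ℤ) : ℂ) := by rw [htre, h2]; norm_cast
        rw [← heq]; exact ht
      rw [eval_intCast_map, eq_intCast] at ht'
      exact_mod_cast ht'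
    · apply hnoroot (-a)
      have ht' : (q.map φ).eval ((-a : ℤ) : ℂ) = 0 := by
        have heq : t = ((-a : ℤ) : ℂ) := by rw [htre, h2]; push_cast; ring
        rw [← heq]; exact ht
      rw [eval_intCast_map, eq_intCast] at ht'
      exact_mod_cast ht'
  have hsum : z + w = -(b : ℂ) := by rw [hwdef]; ring
  have hprod : z * w = (c : ℂ) := by rw [hwdef]; linear_combination -hzeq
  have habsc : |c| = a ^ 2 := by
    have h1 : ‖((c : ℂ))‖ = |(a : ℝ)| ^ 2 := by
      rw [← hprod, norm_mul, habsz, habsw, habsa]; ring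
    rw [Complex.norm_intCast] at h1
    have h2 : |(c : ℝ)| = ((a ^ 2 : ℤ) : ℝ) := by
      rw [h1]; push_cast; rw [sq_abs]
    exact_mod_cast h2
  rcases (abs_eq (sq_nonneg a)).mp habsc with hc | hc
  · refine ⟨a, b, ?_, ?_⟩
    · rw [hfq, hl, hq, hc]
    · by_contra hge
      push_neg at hge
      set s : ℂ := z - w with hs
      have hs2 : s ^ 2 = ((b ^ 2 - 4 * a ^ 2 : ℤ) : ℂ) := by
        have hr : s ^ 2 = (z + w) ^ 2 - 4 * (z * w) := by rw [hs]; ring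
        rw [hr, hsum, hprod, hc]; push_cast; ring
      have hsim : s.im = 0 := by
        have him : (s ^ 2).im = 0 := by rw [hs2, Complex.intCast_im]
        have hre2 : (s ^ 2).re = ((b ^ 2 - 4 * a ^ 2 : ℤ) : ℝ) := by rw [hs2, Complex.intCast_re]
        rw [pow_two, Complex.mul_im] at him
        by_contra hsim0
        have hsre : s.re = 0 := by
          rcases mul_eq_zero.mp (by linarith [him] : (2 : ℝ) * (s.re * s.im) = 0) with h | h
          · norm_num at h
          · rcases mul_eq_zero.mp h with h' | h'
            · exact h'
            · exact absurd h' hsim0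
        have hneg : ((b ^ 2 - 4 * a ^ 2 : ℤ) : ℝ) = -(s.im ^ 2) := by
          rw [← hre2, pow_two, Complex.mul_re, hsre]; ring
        have hge' : (0 : ℝ) ≤ ((b ^ 2 - 4 * a ^ 2 : ℤ) : ℝ) := by exact_mod_cast hge
        have hpos : 0 < s.im ^ 2 :=
          lt_of_le_of_ne (sq_nonneg _) (Ne.symm (pow_ne_zero 2 hsim0))
        linarith
      have hzim : z.im = 0 := by
        have h2z : (2 : ℂ) * z = -(b : ℂ) + s := by rw [hs]; linear_combination hsum
        have him := congrArg Complex.im h2z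
        simp [hsim, Complex.mul_im] at him
        linarith [him]
      exact hreal z hz habsz hzim
  · exfalso
    by_cases ha0 : a = 0
    · apply hreal z hz habsz
      have h0 : ‖z‖ = 0 := by rw [habsz, habsa, ha0]; simp
      have hz0 : z = 0 := by simpa using h0
      simp [hz0]
    · have hz0 : z ≠ 0 := by
        intro h0
        rw [h0, norm_zero] at habsz
        rw [habsa] at habsz
        have : (a : ℝ) = 0 := by
          have := abs_eq_zero.mp habsz.symm
          exact this
        exact ha0 (by exact_mod_cast this)
      have hconj : z * (starRingEnd ℂ) z = ((a : ℂ)) ^ 2 := by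
        rw [Complex.mul_conj]
        have hn : Complex.normSq z = (a : ℝ) ^ 2 := by
          rw [← Complex.sq_norm, habsz, habsa, sq_abs]
        rw [hn]; push_cast; ring
      have hw' : w = -((starRingEnd ℂ) z) := by
        have h1 : z * w = -((a : ℂ)) ^ 2 := by rw [hprod, hc]; push_cast; ring
        have h2 : z * w = z * (-((starRingEnd ℂ) z)) := by
          rw [h1, ← hconj]; ring
        exact mul_left_cancel₀ hz0 h2
      have hzim : z.im = 0 := by
        have him := congrArg Complex.im hsum
        rw [hw'] at him
        simp at him
        linarith [him]
      exact hreal z hz habsz hzim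

theorem stmt7 (f : Polynomial ℤ) (hm : f.Monic) (hdeg : f.natDegree = 3)
    (heqmod : ∀ z ∈ (f.map (Int.castRingHom ℂ)).roots,
      ∀ w ∈ (f.map (Int.castRingHom ℂ)).roots, ‖z‖ = ‖w‖)
    (hfactor : ∃ l q : Polynomial ℤ, l.natDegree = 1 ∧ q.natDegree = 2 ∧
      Irreducible q ∧ f = l * q) :
    ∃ a b : ℤ, f = (X + C a) * (X ^ 2 + C b * X + C (a ^ 2)) ∧ b ^ 2 - 4 * a ^ 2 < 0 := by
  obtain ⟨l, q, hl1, hq2, hirr, hfq⟩ := hfactor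
  have hlc : l.leadingCoeff * q.leadingCoeff = 1 := by
    rw [← leadingCoeff_mul, ← hfq]; exact hm
  rcases Int.mul_eq_one_iff_eq_one_or_neg_one.mp hlc with ⟨h1, h2⟩ | ⟨h1, h2⟩
  · exact aux_main f l q hm heqmod h1 h2 hl1 hq2 hirr hfq
  · refine aux_main f (-l) (-q) hm heqmod ?_ ?_ ?_ ?_ ?_ ?_
    · show (-l).leadingCoeff = 1
      rw [leadingCoeff_neg, h1]; ring
    · show (-q).leadingCoeff = 1
      rw [leadingCoeff_neg, h2]; ring
    · rw [natDegree_neg]; exact hl1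
    · rw [natDegree_neg]; exact hq2
    · exact (Associated.irreducible ⟨-1, by simp⟩ hirr)
    · rw [hfq]; ring
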